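/- arXiv:1202.1976 — 2 statements merged into one kernel-verified Lean document; each statement's English description precedes it below -/
import Mathlib

section
/- For every nonnegative integer n, real ν ≥ 0, real u, and α > 0: ∫_{-∞}^{∞} L_n^{(ν)}(x,u) exp(-α x²) dx = √(π/α) · (Γ(n+ν+1)/n!) · Q_n^{(ν)}(u, 1/(4α)), where L_n^{(ν)}(x,y) = Γ(n+ν+1) ∑_{k=0}^{n} (-1)^k x^k y^(n-k) / ((n-k)! k! Γ(k+ν+1)) is the two-variable associated Laguerre polynomial. -/
open Real MeasureTheory Finset Nat

/-- Two-variable associated Laguerre polynomial `L_n^{(ν)}(x,y)`. -/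
noncomputable def Lassoc (ν : ℝ) (n : ℕ) (x y : ℝ) : ℝ :=
  Real.Gamma (n + ν + 1) * ∑ k ∈ Finset.range (n + 1),
    (-1 : ℝ) ^ k * x ^ k * y ^ (n - k) /
      (((n - k)! : ℝ) * (k ! : ℝ) * Real.Gamma (k + ν + 1))

/-- The polynomials `Q_n^{(ν)}(x,y)`. -/
noncomputable def Qpoly (ν : ℝ) (n : ℕ) (x y : ℝ) : ℝ :=
  (n ! : ℝ) * ∑ k ∈ Finset.range (n / 2 + 1),
    x ^ (n - 2 * k) * y ^ k /
      (((n - 2 * k)! : ℝ) * (k ! : ℝ) * Real.Gamma (2 * k + ν + 1))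


lemma Gamma_nat_add_half (m : ℕ) :
    Real.Gamma ((m : ℝ) + 1 / 2) = Real.sqrt π * (2 * m)! / (4 ^ m * m !) := by
  induction m with
  | zero =>
      have h0 := Real.Gamma_one_half_eq
      rw [one_div] at h0
      simpa using h0
  | succ m ih =>
      have h : ((m + 1 : ℕ) : ℝ) + 1 / 2 = ((m : ℝ) + 1 / 2) + 1 := by push_cast; ring
      have hne : ((m : ℝ) + 1 / 2) ≠ 0 := by positivity
      rw [h, Real.Gamma_add_one hne, ih]
      have h1 : (2 * (m + 1)) = (2 * m + 1) + 1 := by ring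
      rw [h1, Nat.factorial_succ, Nat.factorial_succ, Nat.factorial_succ]
      have h4 : (4 : ℝ) ^ (m + 1) = 4 ^ m * 4 := by ring
      push_cast
      rw [h4]
      have hfm : ((m)! : ℝ) ≠ 0 := Nat.cast_ne_zero.mpr (Nat.factorial_ne_zero m)
      have h4m : (4 : ℝ) ^ m ≠ 0 := by positivity
      field_simp
      ring

lemma integrable_pow_gaussian {α : ℝ} (hα : 0 < α) (k : ℕ) :
    Integrable fun x : ℝ => x ^ k * Real.exp (-α * x ^ 2) := by
  have := integrable_rpow_mul_exp_neg_mul_sq hα (s := (k : ℝ))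
    (lt_of_lt_of_le neg_one_lt_zero (Nat.cast_nonneg k))
  simpa [Real.rpow_natCast] using this

lemma moment_odd {α : ℝ} (m : ℕ) :
    ∫ x : ℝ, x ^ (2 * m + 1) * Real.exp (-α * x ^ 2) = 0 := by
  have h := MeasureTheory.integral_neg_eq_self
    (fun x : ℝ => x ^ (2 * m + 1) * Real.exp (-α * x ^ 2)) volume
  have h2 : ∀ x : ℝ, (-x) ^ (2 * m + 1) * Real.exp (-α * (-x) ^ 2)
      = -(x ^ (2 * m + 1) * Real.exp (-α * x ^ 2)) := by
    intro x
    rw [Odd.neg_pow ⟨m, by ring⟩, neg_sq]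
    ring
  simp only [h2, integral_neg] at h
  linarith

lemma moment_even {α : ℝ} (hα : 0 < α) (m : ℕ) :
    ∫ x : ℝ, x ^ (2 * m) * Real.exp (-α * x ^ 2)
      = Real.sqrt (π / α) * (2 * m)! / ((m)! * (4 * α) ^ m) := by
  have habs : ∀ x : ℝ, x ^ (2 * m) * Real.exp (-α * x ^ 2)
      = (fun t : ℝ => t ^ (2 * m) * Real.exp (-α * t ^ 2)) |x| := by
    intro x
    simp only [pow_mul, sq_abs]
  calc ∫ x : ℝ, x ^ (2 * m) * Real.exp (-α * x ^ 2)
      = ∫ x : ℝ, (fun t : ℝ => t ^ (2 * m) * Real.exp (-α * t ^ 2)) |x| := by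
        simp_rw [← habs]
    _ = 2 * ∫ x in Set.Ioi (0 : ℝ), x ^ (2 * m) * Real.exp (-α * x ^ 2) :=
        integral_comp_abs (f := fun t : ℝ => t ^ (2 * m) * Real.exp (-α * t ^ 2))
    _ = 2 * ∫ x in Set.Ioi (0 : ℝ), x ^ ((2 * m : ℕ) : ℝ) * Real.exp (-α * x ^ (2 : ℝ)) := by
        congr 1
        refine setIntegral_congr_fun measurableSet_Ioi (fun x hx => ?_)
        rw [Real.rpow_natCast, Real.rpow_two]
    _ = 2 * (α ^ (-(((2 * m : ℕ) : ℝ) + 1) / 2) * (1 / 2) *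
          Real.Gamma ((((2 * m : ℕ) : ℝ) + 1) / 2)) := by
        rw [integral_rpow_mul_exp_neg_mul_rpow two_pos
          (lt_of_lt_of_le neg_one_lt_zero (Nat.cast_nonneg _)) hα]
    _ = Real.sqrt (π / α) * (2 * m)! / ((m)! * (4 * α) ^ m) := by
        have h1 : (((2 * m : ℕ) : ℝ) + 1) / 2 = (m : ℝ) + 1 / 2 := by push_cast; ring
        have h2 : -(((2 * m : ℕ) : ℝ) + 1) / 2 = -(m : ℝ) + -(1 / 2) := by push_cast; ring
        rw [h1, h2, _root_.Gamma_nat_add_half, Real.rpow_add hα, Real.rpow_neg hα.le,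
          Real.rpow_natCast, Real.rpow_neg hα.le, ← Real.sqrt_eq_rpow,
          Real.sqrt_div Real.pi_pos.le α, mul_pow]
        have hsa : Real.sqrt α ≠ 0 := ne_of_gt (Real.sqrt_pos.mpr hα)
        have ham : (α : ℝ) ^ m ≠ 0 := by positivity
        have h4m : (4 : ℝ) ^ m ≠ 0 := by positivity
        have hfm : ((m)! : ℝ) ≠ 0 := Nat.cast_ne_zero.mpr (Nat.factorial_ne_zero m)
        field_simp

theorem assoc_laguerre_gaussian_integral' (n : ℕ) (ν : ℝ) (hν : 0 ≤ ν) (u α : ℝ)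
    (hα : 0 < α) :
    ∫ x : ℝ, (Real.Gamma (n + ν + 1) * ∑ k ∈ Finset.range (n + 1),
      (-1 : ℝ) ^ k * x ^ k * u ^ (n - k) /
      (((n - k)! : ℝ) * (k ! : ℝ) * Real.Gamma (k + ν + 1))) * Real.exp (-α * x ^ 2) =
      Real.sqrt (π / α) * (Real.Gamma (n + ν + 1) / (n ! : ℝ)) *
        ((n ! : ℝ) * ∑ k ∈ Finset.range (n / 2 + 1),
          u ^ (n - 2 * k) * (1 / (4 * α)) ^ k /
          (((n - 2 * k)! : ℝ) * (k ! : ℝ) * Real.Gamma (2 * k + ν + 1))) := by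
  set C : ℕ → ℝ := fun k => Real.Gamma (n + ν + 1) *
    ((-1 : ℝ) ^ k * u ^ (n - k) / (((n - k)! : ℝ) * (k ! : ℝ) * Real.Gamma (k + ν + 1)))
    with hC
  set M : ℕ → ℝ := fun k => ∫ x : ℝ, x ^ k * Real.exp (-α * x ^ 2) with hM
  have step1 : ∫ x : ℝ, (Real.Gamma (n + ν + 1) * ∑ k ∈ Finset.range (n + 1),
      (-1 : ℝ) ^ k * x ^ k * u ^ (n - k) /
      (((n - k)! : ℝ) * (k ! : ℝ) * Real.Gamma (k + ν + 1))) * Real.exp (-α * x ^ 2)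
      = ∑ k ∈ Finset.range (n + 1), C k * M k := by
    have heq : ∀ x : ℝ, (Real.Gamma (n + ν + 1) * ∑ k ∈ Finset.range (n + 1),
        (-1 : ℝ) ^ k * x ^ k * u ^ (n - k) /
        (((n - k)! : ℝ) * (k ! : ℝ) * Real.Gamma (k + ν + 1))) * Real.exp (-α * x ^ 2)
        = ∑ k ∈ Finset.range (n + 1), C k * (x ^ k * Real.exp (-α * x ^ 2)) := by
      intro x
      rw [mul_assoc, Finset.sum_mul, Finset.mul_sum]
      refine Finset.sum_congr rfl fun k _ => ?_
      rw [hC]; ring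
    simp_rw [heq]
    rw [integral_finset_sum _ (fun k _ => (integrable_pow_gaussian hα k).const_mul (C k))]
    refine Finset.sum_congr rfl fun k _ => ?_
    rw [MeasureTheory.integral_const_mul]
  rw [step1]
  have step2 : ∑ k ∈ Finset.range (n + 1), C k * M k
      = ∑ k ∈ (Finset.range (n + 1)).filter (fun k => Even k), C k * M k := by
    refine (Finset.sum_filter_of_ne fun k _ hne => ?_).symm
    by_contra hodd
    obtain ⟨m, hm⟩ := Nat.not_even_iff_odd.mp hodd
    apply hne
    rw [hM]
    simp only [hm]
    rw [moment_odd, mul_zero]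
  rw [step2]
  have step3 : ∑ k ∈ (Finset.range (n + 1)).filter (fun k => Even k), C k * M k
      = ∑ m ∈ Finset.range (n / 2 + 1), C (2 * m) * M (2 * m) := by
    refine Finset.sum_nbij' (i := fun k => k / 2) (j := fun m => 2 * m) ?_ ?_ ?_ ?_ ?_
    · intro k hk
      simp only [Finset.mem_filter, Finset.mem_range] at hk
      simp only [Finset.mem_range]
      omega
    · intro m hm
      simp only [Finset.mem_range] at hm
      simp only [Finset.mem_filter, Finset.mem_range]
      constructor
      · omega
      · exact ⟨m, by ring⟩
    · intro k hk
      simp only [Finset.mem_filter] at hk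
      obtain ⟨m, hm⟩ := hk.2
      show 2 * (k / 2) = k
      omega
    · intro m _
      show (2 * m) / 2 = m
      omega
    · intro k hk
      simp only [Finset.mem_filter] at hk
      obtain ⟨m, hm⟩ := hk.2
      show C k * M k = C (2 * (k / 2)) * M (2 * (k / 2))
      have : 2 * (k / 2) = k := by omega
      rw [this]
  rw [step3, Finset.mul_sum, Finset.mul_sum]
  refine Finset.sum_congr rfl fun m hm => ?_
  have hMval : M (2 * m) = Real.sqrt (π / α) * (2 * m)! / ((m)! * (4 * α) ^ m) :=
    moment_even hα m
  simp only [hC]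
  rw [hMval]
  have hneg : (-1 : ℝ) ^ (2 * m) = 1 := by rw [pow_mul]; norm_num
  rw [hneg]
  have hcast : ((2 * m : ℕ) : ℝ) + ν + 1 = 2 * (m : ℝ) + ν + 1 := by push_cast; ring
  rw [hcast]
  have hG : Real.Gamma (2 * (m : ℝ) + ν + 1) ≠ 0 :=
    ne_of_gt (Real.Gamma_pos_of_pos (by positivity))
  have h1 : ((n - 2 * m)! : ℝ) ≠ 0 := Nat.cast_ne_zero.mpr (Nat.factorial_ne_zero _)
  have h2 : ((2 * m)! : ℝ) ≠ 0 := Nat.cast_ne_zero.mpr (Nat.factorial_ne_zero _)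
  have h3 : ((m)! : ℝ) ≠ 0 := Nat.cast_ne_zero.mpr (Nat.factorial_ne_zero _)
  have h4 : ((n)! : ℝ) ≠ 0 := Nat.cast_ne_zero.mpr (Nat.factorial_ne_zero _)
  have h5 : (4 * α) ≠ 0 := by positivity
  have h6 : (4 * α) ^ m ≠ 0 := by positivity
  field_simp
  rw [one_div_pow]
  field_simp

theorem assoc_laguerre_gaussian_integral (n : ℕ) (ν : ℝ) (hν : 0 ≤ ν) (u α : ℝ)
    (hα : 0 < α) :
    ∫ x : ℝ, Lassoc ν n x u * Real.exp (-α * x ^ 2) =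
      Real.sqrt (π / α) * (Real.Gamma (n + ν + 1) / (n ! : ℝ)) *
        Qpoly ν n u (1 / (4 * α)) := by
  simp only [Lassoc, Qpoly]
  exact assoc_laguerre_gaussian_integral' n ν hν u α hα
end

section
/- For all nonnegative integers m, n, reals a, b, f, g, y, and α > 0: ∫_{-∞}^{∞} (a x + b)^m H_n(f x + g, y) exp(-α x²) dx = √(π/α) · H_{m,n}(b, a²/(4α); g, y + f²/(4α) | a f/(2α)). -/
open Real MeasureTheory Finset Nat

/-- Two-variable Hermite polynomial `H_n(x,y)`. -/
noncomputable def H2v (n : ℕ) (x y : ℝ) : ℝ :=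
  (n ! : ℝ) * ∑ k ∈ Finset.range (n / 2 + 1),
    x ^ (n - 2 * k) * y ^ k / (((n - 2 * k)! : ℝ) * (k ! : ℝ))

/-- Two-index Hermite polynomial `H_{m,n}(x,y;w,z|τ)`. -/
noncomputable def H2idx (m n : ℕ) (x y w z τ : ℝ) : ℝ :=
  (m ! : ℝ) * (n ! : ℝ) * ∑ k ∈ Finset.range (min m n + 1),
    τ ^ k * H2v (m - k) x y * H2v (n - k) w z /
      (((m - k)! : ℝ) * ((n - k)! : ℝ) * (k ! : ℝ))

lemma H2v_zero (x y : ℝ) : H2v 0 x y = 1 := by simp [H2v]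
lemma H2v_one (x y : ℝ) : H2v 1 x y = x := by simp [H2v]

lemma H2v_succ (n : ℕ) (x y : ℝ) :
    H2v (n + 1) x y = x * H2v n x y + 2 * y * n * H2v (n - 1) x y := by
  cases n with
  | zero => simp [H2v_one, H2v_zero]
  | succ p =>
    simp only [Nat.add_sub_cancel]
    have h22 : (p + 1 + 1) / 2 + 1 = p / 2 + 2 := by omega
    set A : ℕ → ℝ := fun k => ((p+1)! : ℝ) * ((p + 2 - 2*k : ℕ) : ℝ) * x ^ (p + 2 - 2*k) * y ^ k
            / (((p + 2 - 2*k)! : ℝ) * (k ! : ℝ)) with hAdef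
    set B : ℕ → ℝ := fun k => ((p+1)! : ℝ) * (2 * (k : ℝ)) * x ^ (p + 2 - 2*k) * y ^ k
            / (((p + 2 - 2*k)! : ℝ) * (k ! : ℝ)) with hBdef
    have hA : x * H2v (p + 1) x y = ∑ k ∈ Finset.range (p / 2 + 2), A k := by
      rw [H2v, Finset.mul_sum, Finset.mul_sum,
        ← Finset.sum_subset (Finset.range_subset_range.2 (by omega : (p+1)/2 + 1 ≤ p/2 + 2))
          (fun k hk hk' => by
            have hz : p + 2 - 2 * k = 0 := by
              simp only [Finset.mem_range] at hk hk'; omega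
            simp [hAdef, hz])]
      apply Finset.sum_congr rfl
      intro k hk
      have hk2 : 2 * k ≤ p + 1 := by
        have := Finset.mem_range.1 hk; omega
      have e1 : p + 2 - 2*k = (p + 1 - 2*k) + 1 := by omega
      simp only [hAdef, e1]
      generalize p + 1 - 2*k = j
      rw [Nat.factorial_succ j]
      have h1 : ((j)! : ℝ) ≠ 0 := Nat.cast_ne_zero.2 (Nat.factorial_ne_zero _)
      have h2 : ((k)! : ℝ) ≠ 0 := Nat.cast_ne_zero.2 (Nat.factorial_ne_zero _)
      have h3 : (j : ℝ) + 1 ≠ 0 := by positivity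
      push_cast
      field_simp
      ring
    have hB : ∑ k ∈ Finset.range (p / 2 + 2), B k = 2 * y * ((p+1 : ℕ) : ℝ) * H2v p x y := by
      rw [Finset.sum_range_succ']
      simp only [hBdef, Nat.cast_zero, mul_zero, zero_mul, mul_zero, zero_div, add_zero]
      rw [H2v, Finset.mul_sum, Finset.mul_sum]
      apply Finset.sum_congr rfl
      intro k hk
      have e1 : p + 2 - 2*(k+1) = p - 2*k := by omega
      rw [e1, Nat.factorial_succ k, Nat.factorial_succ p]
      have h1 : ((p - 2*k)! : ℝ) ≠ 0 := Nat.cast_ne_zero.2 (Nat.factorial_ne_zero _)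
      have h2 : ((k)! : ℝ) ≠ 0 := Nat.cast_ne_zero.2 (Nat.factorial_ne_zero _)
      have h3 : (k : ℝ) + 1 ≠ 0 := by positivity
      push_cast
      field_simp
      ring
    rw [hA, ← hB, ← Finset.sum_add_distrib, H2v, Finset.mul_sum, h22]
    apply Finset.sum_congr rfl
    intro k hk
    have hk2 : 2 * k ≤ p + 2 := by
      have := Finset.mem_range.1 hk; omega
    simp only [hAdef, hBdef]
    have e2 : ((p + 2 - 2*k : ℕ) : ℝ) = (p:ℝ) + 2 - 2*k := by
      push_cast [Nat.cast_sub hk2]; ring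
    have e1 : ((p + 1 + 1)! : ℝ) = ((p:ℝ)+2) * ((p+1)! : ℝ) := by
      rw [Nat.factorial_succ]; push_cast; ring
    rw [show p + 1 + 1 - 2*k = p + 2 - 2*k from rfl, e1, e2]
    ring

lemma H2idx_eq (m n : ℕ) (x y w z τ : ℝ) (N : ℕ) (hN : min m n + 1 ≤ N) :
    H2idx m n x y w z τ = ∑ k ∈ Finset.range N,
      (m.choose k : ℝ) * (n.choose k : ℝ) * (k ! : ℝ) * τ ^ k *
        H2v (m - k) x y * H2v (n - k) w z := by
  rw [H2idx, Finset.mul_sum,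
    ← Finset.sum_subset (Finset.range_subset_range.2 hN)
      (fun k hk hk' => by
        simp only [Finset.mem_range] at hk hk'
        have : m < k ∨ n < k := by omega
        rcases this with h | h
        · rw [Nat.choose_eq_zero_of_lt h]; simp
        · rw [Nat.choose_eq_zero_of_lt h]; simp)]
  apply Finset.sum_congr rfl
  intro k hk
  have hkm : k ≤ m := by have := Finset.mem_range.1 hk; omega
  have hkn : k ≤ n := by have := Finset.mem_range.1 hk; omega
  rw [Nat.cast_choose ℝ hkm, Nat.cast_choose ℝ hkn]
  have h1 : ((m-k)! : ℝ) ≠ 0 := Nat.cast_ne_zero.2 (Nat.factorial_ne_zero _)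
  have h2 : ((n-k)! : ℝ) ≠ 0 := Nat.cast_ne_zero.2 (Nat.factorial_ne_zero _)
  have h3 : ((k)! : ℝ) ≠ 0 := Nat.cast_ne_zero.2 (Nat.factorial_ne_zero _)
  field_simp

lemma cast_sub_mul_choose (m k : ℕ) :
    ((m - k : ℕ) : ℝ) * (m.choose k : ℝ) = (m : ℝ) * ((m - 1).choose k : ℝ) := by
  cases m with
  | zero => simp
  | succ q =>
    simp only [Nat.add_sub_cancel]
    rcases le_or_gt k q with hk | hk
    · rw [Nat.cast_choose ℝ (by omega : k ≤ q + 1), Nat.cast_choose ℝ hk]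
      have e1 : q + 1 - k = (q - k) + 1 := by omega
      rw [e1]
      have f1 : (((q-k) + 1)! : ℝ) = (((q-k) + 1 : ℕ) : ℝ) * ((q-k)! : ℝ) := by
        rw [Nat.factorial_succ]; push_cast; ring
      have f2 : ((q+1)! : ℝ) = ((q+1 : ℕ) : ℝ) * ((q)! : ℝ) := by
        rw [Nat.factorial_succ]; push_cast; ring
      rw [f1, f2]
      generalize q - k = j
      have h1 : ((j)! : ℝ) ≠ 0 := Nat.cast_ne_zero.2 (Nat.factorial_ne_zero _)
      have h3 : ((k)! : ℝ) ≠ 0 := Nat.cast_ne_zero.2 (Nat.factorial_ne_zero _)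
      have h5 : ((j + 1 : ℕ) : ℝ) ≠ 0 := Nat.cast_ne_zero.2 (by omega)
      have h6 : ((q+1 : ℕ) : ℝ) ≠ 0 := Nat.cast_ne_zero.2 (by omega)
      field_simp
    · rw [show q + 1 - k = 0 from by omega, Nat.choose_eq_zero_of_lt (by omega : q < k)]
      simp

lemma cast_choose_succ_mul (n j : ℕ) :
    (n.choose (j+1) : ℝ) * (((j+1))! : ℝ) = (n : ℝ) * ((n-1).choose j : ℝ) * ((j)! : ℝ) := by
  cases n with
  | zero => simp
  | succ q =>
    simp only [Nat.add_sub_cancel]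
    rcases le_or_gt j q with hj | hj
    · rw [Nat.cast_choose ℝ (by omega : j + 1 ≤ q + 1), Nat.cast_choose ℝ hj,
        show q + 1 - (j+1) = q - j from by omega]
      have f2 : ((q+1)! : ℝ) = ((q+1 : ℕ) : ℝ) * ((q)! : ℝ) := by
        rw [Nat.factorial_succ]; push_cast; ring
      rw [f2]
      have h1 : ((q-j)! : ℝ) ≠ 0 := Nat.cast_ne_zero.2 (Nat.factorial_ne_zero _)
      have h2 : ((j)! : ℝ) ≠ 0 := Nat.cast_ne_zero.2 (Nat.factorial_ne_zero _)
      have h3 : (((j+1))! : ℝ) ≠ 0 := Nat.cast_ne_zero.2 (Nat.factorial_ne_zero _)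
      field_simp
    · rw [Nat.choose_eq_zero_of_lt (by omega : q + 1 < j + 1),
        Nat.choose_eq_zero_of_lt hj]
      simp


lemma H2idx_succ_left' (m n : ℕ) (x y w z τ : ℝ) :
    H2idx (m+1) n x y w z τ
      = x * H2idx m n x y w z τ + 2 * y * (m:ℝ) * H2idx (m-1) n x y w z τ
        + τ * (n:ℝ) * H2idx m (n-1) x y w z τ := by
  set M := m + n + 1 with hM
  rw [H2idx_eq (m+1) n x y w z τ (M+1) (by omega), H2idx_eq m n x y w z τ (M+1) (by omega),
      H2idx_eq (m-1) n x y w z τ (M+1) (by omega), H2idx_eq m (n-1) x y w z τ (M+1) (by omega),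
      Finset.mul_sum, Finset.mul_sum, Finset.mul_sum, ← Finset.sum_add_distrib]
  have hS1 : ∀ k ∈ Finset.range (M+1),
      x * ((m.choose k : ℝ) * (n.choose k : ℝ) * (k ! : ℝ) * τ^k * H2v (m-k) x y * H2v (n-k) w z)
      + 2*y*(m:ℝ) * (((m-1).choose k : ℝ) * (n.choose k : ℝ) * (k ! : ℝ) * τ^k * H2v (m-1-k) x y * H2v (n-k) w z)
      = (m.choose k : ℝ) * (n.choose k : ℝ) * (k ! : ℝ) * τ^k * H2v (m+1-k) x y * H2v (n-k) w z := by
    intro k hk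
    rcases le_or_gt k m with hkm | hkm
    · rw [show m + 1 - k = (m - k) + 1 from by omega, H2v_succ (m-k) x y,
          show m - k - 1 = m - 1 - k from by omega]
      linear_combination (-2*y*(n.choose k : ℝ)*(k ! :ℝ)*τ^k * H2v (m-1-k) x y * H2v (n-k) w z) * cast_sub_mul_choose m k
    · rw [Nat.choose_eq_zero_of_lt hkm, Nat.choose_eq_zero_of_lt (by omega : m - 1 < k)]
      simp
  rw [Finset.sum_congr rfl hS1]
  rw [Finset.sum_range_succ' (fun k => ((m+1).choose k : ℝ) * (n.choose k : ℝ) * (k ! : ℝ) * τ^k * H2v (m+1-k) x y * H2v (n-k) w z) M,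
      Finset.sum_range_succ' (fun k => (m.choose k : ℝ) * (n.choose k : ℝ) * (k ! : ℝ) * τ^k * H2v (m+1-k) x y * H2v (n-k) w z) M,
      Finset.sum_range_succ (fun k => τ * (n:ℝ) * ((m.choose k : ℝ) * ((n-1).choose k : ℝ) * (k ! : ℝ) * τ^k * H2v (m-k) x y * H2v (n-1-k) w z)) M]
  have hlast : τ * (n:ℝ) * ((m.choose M : ℝ) * ((n-1).choose M : ℝ) * ((M)! : ℝ) * τ^M * H2v (m-M) x y * H2v (n-1-M) w z) = 0 := by
    rw [Nat.choose_eq_zero_of_lt (by omega : m < M)]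
    simp
  rw [hlast, add_zero]
  have hF0 : (((m+1).choose 0 : ℝ) * (n.choose 0 : ℝ) * ((0)! : ℝ) * τ^0 * H2v (m+1-0) x y * H2v (n-0) w z)
      = ((m.choose 0 : ℝ) * (n.choose 0 : ℝ) * ((0)! : ℝ) * τ^0 * H2v (m+1-0) x y * H2v (n-0) w z) := by
    simp
  rw [hF0, add_right_comm, ← Finset.sum_add_distrib]
  congr 1
  apply Finset.sum_congr rfl
  intro j hj
  rw [show m + 1 - (j+1) = m - j from by omega, show n - (j+1) = n - 1 - j from by omega,
      Nat.choose_succ_succ m j]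
  push_cast
  linear_combination ((m.choose j : ℝ) * τ^(j+1) * H2v (m-j) x y * H2v (n-1-j) w z) * cast_choose_succ_mul n j


lemma hasDerivAt_H2v (n : ℕ) (y u : ℝ) :
    HasDerivAt (fun t => H2v n t y) ((n : ℝ) * H2v (n - 1) u y) u := by
  cases n with
  | zero =>
    have : (fun t => H2v 0 t y) = fun _ => (1:ℝ) := funext fun t => H2v_zero t y
    rw [this]
    simpa using hasDerivAt_const u (1:ℝ)
  | succ p =>
    have hd : HasDerivAt (fun t => H2v (p+1) t y)
        (((p+1)! : ℝ) * ∑ k ∈ Finset.range ((p+1)/2+1),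
          ((p+1-2*k : ℕ) : ℝ) * u ^ (p+1-2*k-1) * y ^ k
            / (((p+1-2*k)! : ℝ) * (k ! : ℝ))) u := by
      simp only [H2v]
      apply HasDerivAt.const_mul
      apply HasDerivAt.fun_sum
      intro k hk
      exact ((hasDerivAt_pow _ u).mul_const _).div_const _
    convert hd using 1
    simp only [Nat.add_sub_cancel]
    rw [← Finset.sum_subset (Finset.range_subset_range.2 (by omega : p/2 + 1 ≤ (p+1)/2 + 1))
        (fun k hk hk' => by
          have hz : p + 1 - 2 * k = 0 := by
            simp only [Finset.mem_range] at hk hk'; omega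
          rw [hz]; simp)]
    rw [H2v, Finset.mul_sum, Finset.mul_sum, Finset.mul_sum]
    apply Finset.sum_congr rfl
    intro k hk
    have hk2 : 2 * k ≤ p := by have := Finset.mem_range.1 hk; omega
    have e1 : p + 1 - 2*k = (p - 2*k) + 1 := by omega
    have e2 : p + 1 - 2*k - 1 = p - 2*k := by omega
    rw [e2, e1]
    generalize p - 2*k = j
    rw [Nat.factorial_succ j, Nat.factorial_succ p]
    have h1 : ((j)! : ℝ) ≠ 0 := Nat.cast_ne_zero.2 (Nat.factorial_ne_zero _)
    have h2 : ((k)! : ℝ) ≠ 0 := Nat.cast_ne_zero.2 (Nat.factorial_ne_zero _)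
    have h3 : (j : ℝ) + 1 ≠ 0 := by positivity
    push_cast
    field_simp

lemma integrable_poly_gauss {α : ℝ} (hα : 0 < α) (P : Polynomial ℝ) :
    Integrable fun x : ℝ => P.eval x * Real.exp (-α * x ^ 2) := by
  induction P using Polynomial.induction_on' with
  | add p q hp hq => simpa [add_mul] using hp.fun_add hq
  | monomial j c =>
    have h := integrable_rpow_mul_exp_neg_mul_sq hα
      (s := (j : ℝ)) (lt_of_lt_of_le (by norm_num) (Nat.cast_nonneg j))
    simp_rw [Real.rpow_natCast] at h
    simpa [Polynomial.eval_monomial, mul_assoc] using h.const_mul c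

lemma eval_rep (a b f g y : ℝ) (m n : ℕ) :
    ∃ P : Polynomial ℝ, ∀ x : ℝ, P.eval x = (a*x+b)^m * H2v n (f*x+g) y := by
  refine ⟨(Polynomial.C a * Polynomial.X + Polynomial.C b)^m *
    (Polynomial.C ((n ! : ℝ)) * ∑ k ∈ Finset.range (n/2+1),
      (Polynomial.C f * Polynomial.X + Polynomial.C g)^(n-2*k) *
        Polynomial.C (y^k / (((n-2*k)! : ℝ) * (k ! : ℝ)))), ?_⟩
  intro x
  simp only [Polynomial.eval_mul, Polynomial.eval_add, Polynomial.eval_pow,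
    Polynomial.eval_C, Polynomial.eval_X, Polynomial.eval_finset_sum, H2v]
  congr 1
  congr 1
  apply Finset.sum_congr rfl
  intro k hk
  ring

lemma int_I {α : ℝ} (hα : 0 < α) (a b f g y : ℝ) (m n : ℕ) :
    Integrable fun x : ℝ => (a*x+b)^m * H2v n (f*x+g) y * Real.exp (-α * x ^ 2) := by
  obtain ⟨P, hP⟩ := eval_rep a b f g y m n
  exact (integrable_poly_gauss hα P).congr
    (Filter.Eventually.of_forall fun x => by simp only [hP x])

lemma int_xI {α : ℝ} (hα : 0 < α) (a b f g y : ℝ) (m n : ℕ) :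
    Integrable fun x : ℝ => x * ((a*x+b)^m * H2v n (f*x+g) y) * Real.exp (-α * x ^ 2) := by
  obtain ⟨P, hP⟩ := eval_rep a b f g y m n
  have := integrable_poly_gauss hα (Polynomial.X * P)
  exact this.congr (Filter.Eventually.of_forall fun x => by
    simp only [Polynomial.eval_mul, Polynomial.eval_X, hP x])

lemma ibp {α : ℝ} (hα : 0 < α) (P P' : ℝ → ℝ) (hd : ∀ x, HasDerivAt P (P' x) x)
    (h1 : Integrable fun x : ℝ => P x * Real.exp (-α * x ^ 2))
    (h2 : Integrable fun x : ℝ => x * P x * Real.exp (-α * x ^ 2))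
    (h3 : Integrable fun x : ℝ => P' x * Real.exp (-α * x ^ 2)) :
    ∫ x : ℝ, x * P x * Real.exp (-α * x ^ 2)
      = (2*α)⁻¹ * ∫ x : ℝ, P' x * Real.exp (-α * x ^ 2) := by
  have hFd : ∀ x : ℝ, HasDerivAt (fun t => -(2*α)⁻¹ * (P t * Real.exp (-α * t ^ 2)))
      (x * P x * Real.exp (-α * x ^ 2) - (2*α)⁻¹ * (P' x * Real.exp (-α * x ^ 2))) x := by
    intro x
    have hp : HasDerivAt (fun t : ℝ => -α * t ^ 2) (-α * (2*x)) x := by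
      simpa using (hasDerivAt_pow 2 x).const_mul (-α)
    have he := hp.exp
    have := ((hd x).fun_mul he).const_mul (-(2*α)⁻¹)
    refine HasDerivAt.congr_deriv this ?_
    have hne : (2*α) ≠ 0 := by positivity
    have hc : (2*α)⁻¹ * (2*α) = 1 := inv_mul_cancel₀ hne
    linear_combination (x * P x * Real.exp (-α * x ^ 2)) * hc
  have hint : Integrable (fun x : ℝ => x * P x * Real.exp (-α * x ^ 2)
      - (2*α)⁻¹ * (P' x * Real.exp (-α * x ^ 2))) := h2.sub (h3.const_mul _)
  have hzero := MeasureTheory.integral_eq_zero_of_hasDerivAt_of_integrable hFd hint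
    (h1.const_mul (-(2*α)⁻¹))
  rw [integral_sub h2 (h3.const_mul _), integral_const_mul] at hzero
  linarith


lemma H2idx_symm (m n : ℕ) (x y w z τ : ℝ) :
    H2idx m n x y w z τ = H2idx n m w z x y τ := by
  rw [H2idx, H2idx, Nat.min_comm n m]
  rw [show ((n !:ℝ) * (m !:ℝ)) = ((m !:ℝ) * (n !:ℝ)) from mul_comm _ _]
  congr 1
  apply Finset.sum_congr rfl
  intro k hk
  ring

lemma H2idx_zero (x y w z τ : ℝ) : H2idx 0 0 x y w z τ = 1 := by
  simp [H2idx, H2v_zero]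

lemma xmoment {α : ℝ} (hα : 0 < α) (a b f g y : ℝ) (q n : ℕ) :
    ∫ x : ℝ, x * ((a*x+b)^q * H2v n (f*x+g) y) * Real.exp (-α * x ^ 2)
      = (2*α)⁻¹ * ((q:ℝ)*a*(∫ x : ℝ, (a*x+b)^(q-1) * H2v n (f*x+g) y * Real.exp (-α * x ^ 2))
         + (n:ℝ)*f*(∫ x : ℝ, (a*x+b)^q * H2v (n-1) (f*x+g) y * Real.exp (-α * x ^ 2))) := by
  set P : ℝ → ℝ := fun x => (a*x+b)^q * H2v n (f*x+g) y with hP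
  set P' : ℝ → ℝ := fun x => ((q:ℝ)*(a*x+b)^(q-1)*a) * H2v n (f*x+g) y
      + (a*x+b)^q * ((n:ℝ) * H2v (n-1) (f*x+g) y * f) with hP'
  have hd : ∀ x, HasDerivAt P (P' x) x := by
    intro x
    have hab : HasDerivAt (fun x : ℝ => a*x+b) a x := by
      simpa using ((hasDerivAt_id x).const_mul a).add_const b
    have hfg : HasDerivAt (fun x : ℝ => f*x+g) f x := by
      simpa using ((hasDerivAt_id x).const_mul f).add_const g
    have hH : HasDerivAt (fun x : ℝ => H2v n (f*x+g) y) ((n:ℝ) * H2v (n-1) (f*x+g) y * f) x := by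
      have h := (hasDerivAt_H2v n y (f*x+g)).comp x hfg; exact h
    exact (hab.pow q).mul hH
  have h3 : Integrable fun x : ℝ => P' x * Real.exp (-α * x ^ 2) := by
    have h := ((int_I hα a b f g y (q-1) n).const_mul ((q:ℝ)*a)).add
      ((int_I hα a b f g y q (n-1)).const_mul ((n:ℝ)*f))
    exact h.congr (Filter.Eventually.of_forall fun x => by simp only [hP', Pi.add_apply]; ring)
  rw [ibp hα P P' hd (int_I hα a b f g y q n) (int_xI hα a b f g y q n) h3]
  congr 1
  rw [show (fun x : ℝ => P' x * Real.exp (-α * x ^ 2))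
      = fun x : ℝ => (q:ℝ)*a*((a*x+b)^(q-1) * H2v n (f*x+g) y * Real.exp (-α * x ^ 2))
        + (n:ℝ)*f*((a*x+b)^q * H2v (n-1) (f*x+g) y * Real.exp (-α * x ^ 2))
      from funext fun x => by simp only [hP']; ring]
  rw [integral_add ((int_I hα a b f g y (q-1) n).const_mul _)
      ((int_I hα a b f g y q (n-1)).const_mul _), integral_const_mul, integral_const_mul]

lemma main_aux (a b f g y α : ℝ) (hα : 0 < α) : ∀ N m n : ℕ, m + n ≤ N →
    (∫ x : ℝ, (a*x+b)^m * H2v n (f*x+g) y * Real.exp (-α * x ^ 2))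
      = Real.sqrt (π/α) * H2idx m n b (a^2/(4*α)) g (y + f^2/(4*α)) (a*f/(2*α)) := by
  intro N
  induction N with
  | zero =>
    intro m n hmn
    obtain ⟨hm, hn⟩ : m = 0 ∧ n = 0 := by omega
    subst hm; subst hn
    simp only [pow_zero, one_mul, H2v_zero, H2idx_zero, mul_one]
    exact integral_gaussian α
  | succ N IH =>
    intro m n hmn
    cases m with
    | succ q =>
      have hsplit : (fun x : ℝ => (a*x+b)^(q+1) * H2v n (f*x+g) y * Real.exp (-α * x ^ 2))
          = fun x : ℝ => a * (x * ((a*x+b)^q * H2v n (f*x+g) y) * Real.exp (-α * x ^ 2))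
            + b * ((a*x+b)^q * H2v n (f*x+g) y * Real.exp (-α * x ^ 2)) :=
        funext fun x => by ring
      rw [hsplit, integral_add ((int_xI hα a b f g y q n).const_mul a)
          ((int_I hα a b f g y q n).const_mul b), integral_const_mul, integral_const_mul,
        xmoment hα a b f g y q n,
        IH (q-1) n (by omega), IH q (n-1) (by omega), IH q n (by omega),
        H2idx_succ_left' q n b (a^2/(4*α)) g (y + f^2/(4*α)) (a*f/(2*α))]
      have hne : (α : ℝ) ≠ 0 := ne_of_gt hα
      field_simp
      ring
    | zero =>
      cases n with
      | zero =>
        simp only [pow_zero, one_mul, H2v_zero, H2idx_zero, mul_one]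
        exact integral_gaussian α
      | succ p =>
        have hsplit : (fun x : ℝ => (a*x+b)^0 * H2v (p+1) (f*x+g) y * Real.exp (-α * x ^ 2))
            = fun x : ℝ => f * (x * ((a*x+b)^0 * H2v p (f*x+g) y) * Real.exp (-α * x ^ 2))
              + (g * ((a*x+b)^0 * H2v p (f*x+g) y * Real.exp (-α * x ^ 2))
                + (2*y*(p:ℝ)) * ((a*x+b)^0 * H2v (p-1) (f*x+g) y * Real.exp (-α * x ^ 2))) :=
          funext fun x => by rw [H2v_succ p (f*x+g) y]; ring
        have hint2 : Integrable (fun x : ℝ => g * ((a*x+b)^0 * H2v p (f*x+g) y * Real.exp (-α * x ^ 2))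
            + (2*y*(p:ℝ)) * ((a*x+b)^0 * H2v (p-1) (f*x+g) y * Real.exp (-α * x ^ 2))) :=
          ((int_I hα a b f g y 0 p).const_mul g).add
              ((int_I hα a b f g y 0 (p-1)).const_mul (2*y*(p:ℝ)))
        rw [hsplit, integral_add ((int_xI hα a b f g y 0 p).const_mul f) hint2,
          integral_add ((int_I hα a b f g y 0 p).const_mul g)
            ((int_I hα a b f g y 0 (p-1)).const_mul (2*y*(p:ℝ))),
          integral_const_mul, integral_const_mul, integral_const_mul,
          xmoment hα a b f g y 0 p,
          IH 0 (p-1) (by omega), IH 0 p (by omega)]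
        have hrec : H2idx 0 (p+1) b (a^2/(4*α)) g (y + f^2/(4*α)) (a*f/(2*α))
            = g * H2idx 0 p b (a^2/(4*α)) g (y + f^2/(4*α)) (a*f/(2*α))
              + 2*(y + f^2/(4*α))*(p:ℝ) * H2idx 0 (p-1) b (a^2/(4*α)) g (y + f^2/(4*α)) (a*f/(2*α)) := by
          rw [H2idx_symm 0 (p+1), H2idx_succ_left' p 0 g (y + f^2/(4*α)) b (a^2/(4*α)) (a*f/(2*α)),
            H2idx_symm p 0, H2idx_symm (p-1) 0]
          push_cast
          ring
        rw [hrec]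
        have hne : (α : ℝ) ≠ 0 := ne_of_gt hα
        push_cast
        field_simp
        ring

theorem gaussian_integral_binomial_hermite (m n : ℕ) (a b f g y α : ℝ) (hα : 0 < α) :
    ∫ x : ℝ, (a * x + b) ^ m * H2v n (f * x + g) y * Real.exp (-α * x ^ 2) =
      Real.sqrt (π / α) *
        H2idx m n b (a ^ 2 / (4 * α)) g (y + f ^ 2 / (4 * α)) (a * f / (2 * α)) :=
  main_aux a b f g y α hα (m + n) m n le_rfl
end
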